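/- Let f be the Student-t density with location 0, scale σ > 0, and degrees of freedom ν > 0, and let φ be a centered Gaussian density with variance s² > 0. Then the convolution (f * φ)(y) = ∫ f(y - u) φ(u) du satisfies (f * φ)(y) = Θ(|y|^{-(ν+1)}) as |y| → ∞; in particular, convolving a Student-t density with a Gaussian preserves its polynomial tail rate. -/

import Mathlib

open MeasureTheory

/-- Student-t density with location `0`, scale `σ`, degrees of freedom `ν`. -/
noncomputable def studentT0 (σ ν y : ℝ) : ℝ :=
  Real.Gamma ((ν + 1) / 2) / (Real.Gamma (ν / 2) * σ * Real.sqrt (ν * Real.pi)) *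
    (1 + (y / σ) ^ 2 / ν) ^ (-((ν + 1) / 2))

/-- Centered Gaussian density with variance `s²`. -/
noncomputable def gaussianDens0 (s y : ℝ) : ℝ :=
  (Real.sqrt (2 * Real.pi * s ^ 2))⁻¹ * Real.exp (-y ^ 2 / (2 * s ^ 2))

section Aux

variable {σ ν s : ℝ}

lemma rpow_sq_aux (a : ℝ) (ha : 0 ≤ a) (e : ℝ) : (a ^ 2) ^ e = a ^ (2 * e) := by
  rw [← Real.rpow_natCast a 2, ← Real.rpow_mul ha]
  norm_num

lemma stK_pos (hσ : 0 < σ) (hν : 0 < ν) :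
    0 < Real.Gamma ((ν + 1) / 2) / (Real.Gamma (ν / 2) * σ * Real.sqrt (ν * Real.pi)) := by
  have h1 : 0 < Real.Gamma ((ν + 1) / 2) := Real.Gamma_pos_of_pos (by linarith)
  have h2 : 0 < Real.Gamma (ν / 2) := Real.Gamma_pos_of_pos (by linarith)
  have h3 : 0 < Real.sqrt (ν * Real.pi) := Real.sqrt_pos.2 (by positivity)
  positivity

lemma stBase_pos (hσ : 0 < σ) (hν : 0 < ν) (x : ℝ) : 0 < 1 + (x / σ) ^ 2 / ν := by
  positivity

lemma stBase_eq (x : ℝ) :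
    1 + (x / σ) ^ 2 / ν = 1 + x ^ 2 / (σ ^ 2 * ν) := by
  rw [div_pow, div_div]

lemma st_pos (hσ : 0 < σ) (hν : 0 < ν) (x : ℝ) : 0 < studentT0 σ ν x :=
  mul_pos (stK_pos hσ hν) (Real.rpow_pos_of_pos (stBase_pos hσ hν x) _)

lemma st_le_K (hσ : 0 < σ) (hν : 0 < ν) (x : ℝ) :
    studentT0 σ ν x ≤
      Real.Gamma ((ν + 1) / 2) / (Real.Gamma (ν / 2) * σ * Real.sqrt (ν * Real.pi)) := by
  have h1 : (1 + (x / σ) ^ 2 / ν) ^ (-((ν + 1) / 2)) ≤ 1 :=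
    Real.rpow_le_one_of_one_le_of_nonpos (le_add_of_nonneg_right (by positivity))
      (by linarith)
  calc studentT0 σ ν x ≤
      Real.Gamma ((ν + 1) / 2) / (Real.Gamma (ν / 2) * σ * Real.sqrt (ν * Real.pi)) * 1 :=
        mul_le_mul_of_nonneg_left h1 (stK_pos hσ hν).le
    _ = _ := mul_one _

lemma st_continuous (hσ : 0 < σ) (hν : 0 < ν) : Continuous (studentT0 σ ν) := by
  unfold studentT0
  refine continuous_const.mul ?_
  refine Continuous.rpow_const (by fun_prop) fun x => Or.inl ?_
  exact (stBase_pos hσ hν x).ne'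

lemma gauss_pos (hs : 0 < s) (y : ℝ) : 0 < gaussianDens0 s y := by
  unfold gaussianDens0
  have : 0 < Real.sqrt (2 * Real.pi * s ^ 2) := Real.sqrt_pos.2 (by positivity)
  positivity

lemma gauss_continuous : Continuous (gaussianDens0 s) := by
  unfold gaussianDens0; fun_prop

lemma gauss_eq (y : ℝ) :
    gaussianDens0 s y =
      (Real.sqrt (2 * Real.pi * s ^ 2))⁻¹ * Real.exp (-(1 / (2 * s ^ 2)) * y ^ 2) := by
  unfold gaussianDens0
  ring_nf

lemma gauss_integrable (hs : 0 < s) : Integrable (gaussianDens0 s) := by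
  have h : Integrable (fun y : ℝ => Real.exp (-(1 / (2 * s ^ 2)) * y ^ 2)) :=
    integrable_exp_neg_mul_sq (by positivity)
  refine (h.const_mul (Real.sqrt (2 * Real.pi * s ^ 2))⁻¹).congr
    (Filter.Eventually.of_forall fun y => ?_)
  rw [gauss_eq]

lemma one_add_abs_rpow_le (hν : 0 < ν) (u : ℝ) :
    (1 + |u|) ^ (ν + 1) ≤ Real.exp ((ν + 1) * |u|) := by
  have h0 : (0:ℝ) < 1 + |u| := by positivity
  rw [Real.rpow_def_of_pos h0]
  apply Real.exp_le_exp.2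
  have hlog : Real.log (1 + |u|) ≤ |u| := by
    have := Real.log_le_sub_one_of_pos h0
    linarith
  calc Real.log (1 + |u|) * (ν + 1) ≤ |u| * (ν + 1) :=
        mul_le_mul_of_nonneg_right hlog (by linarith)
    _ = (ν + 1) * |u| := by ring

lemma psi_integrable (hν : 0 < ν) (hs : 0 < s) :
    Integrable (fun u : ℝ => (1 + |u|) ^ (ν + 1) * gaussianDens0 s u) := by
  set b : ℝ := 1 / (2 * s ^ 2) with hb
  have hbpos : 0 < b := by positivity
  have hint : Integrable (fun u : ℝ =>
      ((Real.sqrt (2 * Real.pi * s ^ 2))⁻¹ * Real.exp ((ν + 1) ^ 2 / (2 * b))) *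
        Real.exp (-(b / 2) * u ^ 2)) :=
    (integrable_exp_neg_mul_sq (by positivity)).const_mul _
  refine hint.mono' ?_ (Filter.Eventually.of_forall fun u => ?_)
  · refine Continuous.aestronglyMeasurable (Continuous.mul ?_ gauss_continuous)
    exact Continuous.rpow_const (by fun_prop) fun x => Or.inl (by positivity)
  · have hsq : 0 < Real.sqrt (2 * Real.pi * s ^ 2) := Real.sqrt_pos.2 (by positivity)
    have h0 : 0 ≤ (1 + |u|) ^ (ν + 1) * gaussianDens0 s u :=
      mul_nonneg (Real.rpow_nonneg (by positivity) _) (gauss_pos hs u).le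
    rw [Real.norm_of_nonneg h0, gauss_eq]
    have h1 : (1 + |u|) ^ (ν + 1) ≤ Real.exp ((ν + 1) * |u|) := one_add_abs_rpow_le hν u
    have key : (1 + |u|) ^ (ν + 1) * Real.exp (-b * u ^ 2) ≤
        Real.exp ((ν + 1) ^ 2 / (2 * b)) * Real.exp (-(b / 2) * u ^ 2) := by
      calc (1 + |u|) ^ (ν + 1) * Real.exp (-b * u ^ 2)
          ≤ Real.exp ((ν + 1) * |u|) * Real.exp (-b * u ^ 2) :=
            mul_le_mul_of_nonneg_right h1 (Real.exp_pos _).le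
        _ = Real.exp ((ν + 1) * |u| + -b * u ^ 2) := (Real.exp_add _ _).symm
        _ ≤ Real.exp ((ν + 1) ^ 2 / (2 * b) + -(b / 2) * u ^ 2) := by
            apply Real.exp_le_exp.2
            have hE : (ν + 1) ^ 2 / (2 * b) * (2 * b) = (ν + 1) ^ 2 :=
              div_mul_cancel₀ _ (by positivity)
            have h2 : (ν + 1) * |u| ≤ (b / 2) * u ^ 2 + (ν + 1) ^ 2 / (2 * b) := by
              nlinarith [sq_nonneg (b * |u| - (ν + 1)), sq_abs u, abs_nonneg u, hE,
                hbpos, mul_pos hbpos hbpos]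
            linarith
        _ = Real.exp ((ν + 1) ^ 2 / (2 * b)) * Real.exp (-(b / 2) * u ^ 2) :=
            Real.exp_add _ _
    calc (1 + |u|) ^ (ν + 1) *
          ((Real.sqrt (2 * Real.pi * s ^ 2))⁻¹ * Real.exp (-b * u ^ 2))
        = (Real.sqrt (2 * Real.pi * s ^ 2))⁻¹ *
            ((1 + |u|) ^ (ν + 1) * Real.exp (-b * u ^ 2)) := by ring
      _ ≤ (Real.sqrt (2 * Real.pi * s ^ 2))⁻¹ *
            (Real.exp ((ν + 1) ^ 2 / (2 * b)) * Real.exp (-(b / 2) * u ^ 2)) :=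
          mul_le_mul_of_nonneg_left key (by positivity)
      _ = (Real.sqrt (2 * Real.pi * s ^ 2))⁻¹ * Real.exp ((ν + 1) ^ 2 / (2 * b)) *
            Real.exp (-(b / 2) * u ^ 2) := by ring

/-- Pointwise upper bound with polynomial decay. -/
lemma st_upper (hσ : 0 < σ) (hν : 0 < ν) (x : ℝ) :
    studentT0 σ ν x ≤
      Real.Gamma ((ν + 1) / 2) / (Real.Gamma (ν / 2) * σ * Real.sqrt (ν * Real.pi)) *
        (2 * max 1 (σ ^ 2 * ν)) ^ ((ν + 1) / 2) * (1 + |x|) ^ (-(ν + 1)) := by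
  have hB1 : (1:ℝ) ≤ max 1 (σ ^ 2 * ν) := le_max_left _ _
  have hB2 : σ ^ 2 * ν ≤ max 1 (σ ^ 2 * ν) := le_max_right _ _
  have hBpos : (0:ℝ) < 2 * max 1 (σ ^ 2 * ν) := by positivity
  have hsn : 0 < σ ^ 2 * ν := by positivity
  have hbase : (1 + |x|) ^ 2 / (2 * max 1 (σ ^ 2 * ν)) ≤ 1 + (x / σ) ^ 2 / ν := by
    rw [stBase_eq, div_le_iff₀ hBpos]
    have habs : |x| ^ 2 = x ^ 2 := sq_abs x
    have hdiv : x ^ 2 / (σ ^ 2 * ν) * (σ ^ 2 * ν) = x ^ 2 := div_mul_cancel₀ _ hsn.ne'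
    have hd0 : 0 ≤ x ^ 2 / (σ ^ 2 * ν) := by positivity
    nlinarith [sq_nonneg (1 - |x|), abs_nonneg x]
  have hx0 : (0:ℝ) < (1 + |x|) ^ 2 / (2 * max 1 (σ ^ 2 * ν)) := by positivity
  have hmono := Real.rpow_le_rpow_of_nonpos hx0 hbase
    (by linarith : -((ν + 1) / 2) ≤ 0)
  have hcalc : ((1 + |x|) ^ 2 / (2 * max 1 (σ ^ 2 * ν))) ^ (-((ν + 1) / 2)) =
      (2 * max 1 (σ ^ 2 * ν)) ^ ((ν + 1) / 2) * (1 + |x|) ^ (-(ν + 1)) := by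
    rw [Real.div_rpow (by positivity) hBpos.le,
      rpow_sq_aux (1 + |x|) (by positivity), Real.rpow_neg hBpos.le, div_inv_eq_mul]
    have he : 2 * -((ν + 1) / 2) = -(ν + 1) := by ring
    rw [he, mul_comm]
  calc studentT0 σ ν x
      ≤ Real.Gamma ((ν + 1) / 2) / (Real.Gamma (ν / 2) * σ * Real.sqrt (ν * Real.pi)) *
        (((1 + |x|) ^ 2 / (2 * max 1 (σ ^ 2 * ν))) ^ (-((ν + 1) / 2))) :=
        mul_le_mul_of_nonneg_left hmono (stK_pos hσ hν).le
    _ = _ := by rw [hcalc]; ring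

/-- Peetre-type inequality. -/
lemma peetre (hν : 0 < ν) (y u : ℝ) :
    (1 + |y - u|) ^ (-(ν + 1)) ≤ (1 + |y|) ^ (-(ν + 1)) * (1 + |u|) ^ (ν + 1) := by
  have h1 : 1 + |y| ≤ (1 + |y - u|) * (1 + |u|) := by
    have hy : |y| ≤ |y - u| + |u| := by
      calc |y| = |(y - u) + u| := by ring_nf
        _ ≤ |y - u| + |u| := abs_add_le _ _
    nlinarith [abs_nonneg (y - u), abs_nonneg u]
  have hP : (0:ℝ) < (1 + |y|) ^ (ν + 1) := Real.rpow_pos_of_pos (by positivity) _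
  have hQ : (0:ℝ) < (1 + |y - u|) ^ (ν + 1) := Real.rpow_pos_of_pos (by positivity) _
  have hR : (0:ℝ) < (1 + |u|) ^ (ν + 1) := Real.rpow_pos_of_pos (by positivity) _
  have h2 : (1 + |y|) ^ (ν + 1) ≤ (1 + |y - u|) ^ (ν + 1) * (1 + |u|) ^ (ν + 1) := by
    rw [← Real.mul_rpow (by positivity) (by positivity)]
    exact Real.rpow_le_rpow (by positivity) h1 (by linarith)
  rw [Real.rpow_neg (by positivity : (0:ℝ) ≤ 1 + |y - u|),
      Real.rpow_neg (by positivity : (0:ℝ) ≤ 1 + |y|)]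
  calc ((1 + |y - u|) ^ (ν + 1))⁻¹ = 1 / ((1 + |y - u|) ^ (ν + 1)) := (one_div _).symm
    _ ≤ (1 + |u|) ^ (ν + 1) / (1 + |y|) ^ (ν + 1) := by
        rw [div_le_div_iff₀ hQ hP]; nlinarith
    _ = ((1 + |y|) ^ (ν + 1))⁻¹ * (1 + |u|) ^ (ν + 1) := by
        rw [div_eq_mul_inv]; ring

/-- Pointwise lower bound near `y`. -/
lemma st_lower (hσ : 0 < σ) (hν : 0 < ν) {y u : ℝ} (hy : 1 ≤ |y|) (hu : |u| ≤ 1) :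
    Real.Gamma ((ν + 1) / 2) / (Real.Gamma (ν / 2) * σ * Real.sqrt (ν * Real.pi)) *
      (1 + 4 / (σ ^ 2 * ν)) ^ (-((ν + 1) / 2)) * |y| ^ (-(ν + 1)) ≤
        studentT0 σ ν (y - u) := by
  have hsn : 0 < σ ^ 2 * ν := by positivity
  have hApos : (0:ℝ) < 1 + 4 / (σ ^ 2 * ν) := by positivity
  have h1 : |y - u| ≤ 2 * |y| := by
    have : |y - u| ≤ |y| + |u| := by
      calc |y - u| = |y + (-u)| := by ring_nf
        _ ≤ |y| + |(-u)| := abs_add_le _ _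
        _ = |y| + |u| := by rw [abs_neg]
    linarith
  have h2 : 1 + ((y - u) / σ) ^ 2 / ν ≤ (1 + 4 / (σ ^ 2 * ν)) * y ^ 2 := by
    rw [stBase_eq]
    have hyu2 : (y - u) ^ 2 ≤ 4 * y ^ 2 := by
      nlinarith [sq_abs (y - u), sq_abs y, abs_nonneg (y - u), abs_nonneg y]
    have hy2 : 1 ≤ y ^ 2 := by nlinarith [sq_abs y]
    have hd : (y - u) ^ 2 / (σ ^ 2 * ν) ≤ 4 * y ^ 2 / (σ ^ 2 * ν) := by gcongr
    have hAy : (1 + 4 / (σ ^ 2 * ν)) * y ^ 2 = y ^ 2 + 4 * y ^ 2 / (σ ^ 2 * ν) := by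
      ring
    linarith
  have hmono := Real.rpow_le_rpow_of_nonpos (stBase_pos hσ hν (y - u)) h2
    (by linarith : -((ν + 1) / 2) ≤ 0)
  have hcalc : ((1 + 4 / (σ ^ 2 * ν)) * y ^ 2) ^ (-((ν + 1) / 2)) =
      (1 + 4 / (σ ^ 2 * ν)) ^ (-((ν + 1) / 2)) * |y| ^ (-(ν + 1)) := by
    rw [Real.mul_rpow hApos.le (sq_nonneg y), ← sq_abs y,
      rpow_sq_aux |y| (abs_nonneg y)]
    have he : 2 * (-((ν + 1) / 2)) = -(ν + 1) := by ring
    rw [he]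
  rw [mul_assoc, ← hcalc]
  exact mul_le_mul_of_nonneg_left hmono (stK_pos hσ hν).le

lemma gauss_lower (hs : 0 < s) {u : ℝ} (hu : |u| ≤ 1) :
    (Real.sqrt (2 * Real.pi * s ^ 2))⁻¹ * Real.exp (-1 / (2 * s ^ 2)) ≤
      gaussianDens0 s u := by
  unfold gaussianDens0
  have hsq : 0 < Real.sqrt (2 * Real.pi * s ^ 2) := Real.sqrt_pos.2 (by positivity)
  refine mul_le_mul_of_nonneg_left (Real.exp_le_exp.2 ?_) (by positivity)
  have hu2 : u ^ 2 ≤ 1 := by nlinarith [sq_abs u, abs_nonneg u]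
  have h3 : (0:ℝ) < 2 * s ^ 2 := by positivity
  rw [div_le_div_iff₀ h3 h3]
  nlinarith

end Aux

theorem studentT_gaussian_convolution_tail (σ ν s : ℝ)
    (hσ : 0 < σ) (hν : 0 < ν) (hs : 0 < s) :
    ∃ c C Y₀ : ℝ, 0 < c ∧ c ≤ C ∧ 0 < Y₀ ∧
      ∀ y : ℝ, Y₀ ≤ |y| →
        c * |y| ^ (-(ν + 1)) ≤ (∫ u, studentT0 σ ν (y - u) * gaussianDens0 s u) ∧
        (∫ u, studentT0 σ ν (y - u) * gaussianDens0 s u) ≤ C * |y| ^ (-(ν + 1)) := by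
  set K := Real.Gamma ((ν + 1) / 2) / (Real.Gamma (ν / 2) * σ * Real.sqrt (ν * Real.pi))
    with hK
  have hKpos : 0 < K := stK_pos hσ hν
  set C₁ : ℝ := K * (2 * max 1 (σ ^ 2 * ν)) ^ ((ν + 1) / 2) with hC₁
  have hC₁pos : 0 < C₁ :=
    mul_pos hKpos (Real.rpow_pos_of_pos (by positivity) _)
  set M : ℝ := ∫ u, (1 + |u|) ^ (ν + 1) * gaussianDens0 s u with hM
  have hMnonneg : 0 ≤ M :=
    integral_nonneg fun u =>
      mul_nonneg (Real.rpow_nonneg (by positivity) _) (gauss_pos hs u).le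
  have hApos : (0:ℝ) < 1 + 4 / (σ ^ 2 * ν) := by positivity
  set d : ℝ := (Real.sqrt (2 * Real.pi * s ^ 2))⁻¹ * Real.exp (-1 / (2 * s ^ 2)) with hd
  have hdpos : 0 < d := by
    have : 0 < Real.sqrt (2 * Real.pi * s ^ 2) := Real.sqrt_pos.2 (by positivity)
    rw [hd]; positivity
  set c₀ : ℝ := K * (1 + 4 / (σ ^ 2 * ν)) ^ (-((ν + 1) / 2)) * d with hc₀
  have hc₀pos : 0 < c₀ :=
    mul_pos (mul_pos hKpos (Real.rpow_pos_of_pos hApos _)) hdpos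
  refine ⟨2 * c₀, max (2 * c₀) (C₁ * M), 1, by positivity, le_max_left _ _, one_pos,
    fun y hy => ?_⟩
  have hypos : 0 < |y| := lt_of_lt_of_le one_pos hy
  have hyv : (0:ℝ) ≤ |y| ^ (-(ν + 1)) := Real.rpow_nonneg (abs_nonneg y) _
  have hnonneg : ∀ u, 0 ≤ studentT0 σ ν (y - u) * gaussianDens0 s u :=
    fun u => mul_nonneg (st_pos hσ hν _).le (gauss_pos hs u).le
  have hint : Integrable (fun u => studentT0 σ ν (y - u) * gaussianDens0 s u) := by
    refine ((gauss_integrable hs).const_mul K).mono' ?_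
      (Filter.Eventually.of_forall fun u => ?_)
    · exact (((st_continuous hσ hν).comp (by fun_prop)).mul
        gauss_continuous).aestronglyMeasurable
    · rw [Real.norm_of_nonneg (hnonneg u)]
      exact mul_le_mul_of_nonneg_right (st_le_K hσ hν _) (gauss_pos hs u).le
  constructor
  · -- lower bound
    have hpt : ∀ u ∈ Set.Icc (-1:ℝ) 1,
        c₀ * |y| ^ (-(ν + 1)) ≤ studentT0 σ ν (y - u) * gaussianDens0 s u := by
      intro u hu
      have hu1 : |u| ≤ 1 := abs_le.2 ⟨hu.1, hu.2⟩
      have h1 := st_lower hσ hν hy hu1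
      have h2 := gauss_lower hs hu1
      rw [← hK] at h1
      rw [← hd] at h2
      have := mul_le_mul h1 h2 hdpos.le (st_pos hσ hν (y - u)).le
      calc c₀ * |y| ^ (-(ν + 1))
          = K * (1 + 4 / (σ ^ 2 * ν)) ^ (-((ν + 1) / 2)) * |y| ^ (-(ν + 1)) * d := by
            rw [hc₀]; ring
        _ ≤ studentT0 σ ν (y - u) * gaussianDens0 s u := this
    have h1 := setIntegral_ge_of_const_le measurableSet_Icc
      (measure_Icc_lt_top).ne hpt hint.integrableOn
    have h2 : (∫ u in Set.Icc (-1:ℝ) 1, studentT0 σ ν (y - u) * gaussianDens0 s u) ≤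
        ∫ u, studentT0 σ ν (y - u) * gaussianDens0 s u :=
      setIntegral_le_integral hint (Filter.Eventually.of_forall hnonneg)
    have hvol : volume.real (Set.Icc (-1:ℝ) 1) = 2 := by
      rw [measureReal_def, Real.volume_Icc]
      norm_num
    rw [hvol] at h1
    calc 2 * c₀ * |y| ^ (-(ν + 1)) = c₀ * |y| ^ (-(ν + 1)) * 2 := by ring
      _ ≤ ∫ u in Set.Icc (-1:ℝ) 1, studentT0 σ ν (y - u) * gaussianDens0 s u := by
          rw [smul_eq_mul] at h1; linarith
      _ ≤ _ := h2
  · -- upper bound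
    have hpt : ∀ u, studentT0 σ ν (y - u) * gaussianDens0 s u ≤
        (C₁ * (1 + |y|) ^ (-(ν + 1))) *
          ((1 + |u|) ^ (ν + 1) * gaussianDens0 s u) := by
      intro u
      have h1 := st_upper hσ hν (y - u)
      rw [← hK, ← hC₁] at h1
      have h2 := peetre hν y u
      have h3 : studentT0 σ ν (y - u) ≤
          C₁ * ((1 + |y|) ^ (-(ν + 1)) * (1 + |u|) ^ (ν + 1)) := by
        calc studentT0 σ ν (y - u) ≤ C₁ * (1 + |y - u|) ^ (-(ν + 1)) := h1
          _ ≤ C₁ * ((1 + |y|) ^ (-(ν + 1)) * (1 + |u|) ^ (ν + 1)) :=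
            mul_le_mul_of_nonneg_left h2 hC₁pos.le
      calc studentT0 σ ν (y - u) * gaussianDens0 s u
          ≤ C₁ * ((1 + |y|) ^ (-(ν + 1)) * (1 + |u|) ^ (ν + 1)) * gaussianDens0 s u :=
            mul_le_mul_of_nonneg_right h3 (gauss_pos hs u).le
        _ = (C₁ * (1 + |y|) ^ (-(ν + 1))) *
              ((1 + |u|) ^ (ν + 1) * gaussianDens0 s u) := by ring
    have hmain := integral_mono hint
      ((psi_integrable hν hs).const_mul (C₁ * (1 + |y|) ^ (-(ν + 1)))) hpt
    rw [integral_const_mul, ← hM] at hmain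
    have hmon : (1 + |y|) ^ (-(ν + 1)) ≤ |y| ^ (-(ν + 1)) :=
      Real.rpow_le_rpow_of_nonpos hypos (by linarith [abs_nonneg y]) (by linarith)
    calc (∫ u, studentT0 σ ν (y - u) * gaussianDens0 s u)
        ≤ C₁ * (1 + |y|) ^ (-(ν + 1)) * M := hmain
      _ ≤ C₁ * |y| ^ (-(ν + 1)) * M := by
          have := mul_le_mul_of_nonneg_left hmon hC₁pos.le
          exact mul_le_mul_of_nonneg_right this hMnonneg
      _ = (C₁ * M) * |y| ^ (-(ν + 1)) := by ring
      _ ≤ max (2 * c₀) (C₁ * M) * |y| ^ (-(ν + 1)) :=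
          mul_le_mul_of_nonneg_right (le_max_right _ _) hyv
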